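/- Let K be a strict orbifold atlas on a compact orbifold Y and V = (V_I)_{I ∈ I_Y} a reduction of K. Then the groupoid V_K is well defined: its set of morphisms contains all identity morphisms, is closed under composition in G_K, and is closed under taking inverses; in particular V_K is a nonsingular étale groupoid. -/

import Mathlib

open Set Topology

/-! ## Strict orbifold atlases (topological version)

A strict orbifold atlas in the sense of McDuff, "Notes on Kuranishi atlases" /
"Strict orbifold atlases and weighted branched manifolds".
Charts are formalized as topological spaces (smooth structures are not encoded;
"étale" maps are local homeomorphisms). -/

/-- The product group `Γ_I = ∏_{i ∈ I} Γ_i`. -/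
abbrev PiGamma {A : Type} (Γ : A → Type) (I : Finset A) : Type := (i : I) → Γ i.1

/-- Restriction (projection) homomorphism `Γ_J → Γ_I` for `I ⊆ J`. -/
def gres {A : Type} {Γ : A → Type} {I J : Finset A} (h : I ⊆ J) (γ : PiGamma Γ J) :
    PiGamma Γ I := fun i => γ ⟨i.1, h i.2⟩

/-- Extension homomorphism `Γ_I → Γ_J` for `I ⊆ J` (putting `1` in the new slots). -/
def gext {A : Type} [DecidableEq A] {Γ : A → Type} [∀ i, Group (Γ i)] {I J : Finset A}
    (_h : I ⊆ J) (γ : PiGamma Γ I) : PiGamma Γ J :=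
  fun j => if hj : j.1 ∈ I then γ ⟨j.1, hj⟩ else 1

/-- Finite groups are given the discrete topology. -/
instance piGammaTop {A : Type} (Γ : A → Type) (I : Finset A) :
    TopologicalSpace (PiGamma Γ I) := ⊥

/-- A **strict orbifold atlas** on a topological space `Y` (Definition 1.4 of the paper),
with basic charts indexed by `A` and charts indexed by the finite subsets
`I ∈ 𝓘_Y = {I ⊆ A nonempty finite | F_I ≠ ∅}`.  For bookkeeping convenience the chart
data `W I`, `ρ I J`, … are declared for *all* finsets `I ⊆ A`; all axioms are imposed for
(pairs of) nonempty finsets, and the axiom `psi_range` forces `W I = ∅` whenever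
`F_I = ∅`, so the charts with `I ∉ 𝓘_Y` carry no information. -/
structure OrbAtlas (Y : Type*) [TopologicalSpace Y] (A : Type) [DecidableEq A]
    (Γ : A → Type) [∀ i, Group (Γ i)] [∀ i, Finite (Γ i)] where
  /-- the footprints `F_i` of the basic charts -/
  F : A → Set Y
  isOpen_F : ∀ i, IsOpen (F i)
  /-- the footprints cover `Y` -/
  cover_F : ∀ y : Y, ∃ i, y ∈ F i
  /-- the footprint cover is locally finite -/
  locFin_F : LocallyFinite F
  /-- the chart domains `W_I` -/
  W : Finset A → Type
  topW : ∀ I, TopologicalSpace (W I)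
  /-- `Γ_I = ∏_{i ∈ I} Γ_i` acts on `W_I` -/
  act : ∀ I, MulAction (PiGamma Γ I) (W I)
  act_cont : ∀ (I : Finset A) (γ : PiGamma Γ I),
    letI := topW I; letI := act I; Continuous fun x : W I => γ • x
  /-- the footprint maps `ψ_I : W_I → Y` -/
  psi : ∀ I, W I → Y
  psi_cont : ∀ I, letI := topW I; Continuous (psi I)
  /-- `ψ_I` is `Γ_I`-invariant -/
  psi_smul : ∀ (I : Finset A) (γ : PiGamma Γ I) (x : W I),
    letI := act I; psi I (γ • x) = psi I x
  /-- `ψ_I` has image the footprint `F_I = ⋂_{i ∈ I} F_i` -/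
  psi_range : ∀ I : Finset A, I.Nonempty → Set.range (psi I) = ⋂ i ∈ I, F i
  /-- the fibres of `ψ_I` are exactly the `Γ_I`-orbits, so `ψ_I` induces a continuous
  bijection `W_I/Γ_I → F_I` -/
  psi_fib : ∀ I : Finset A, I.Nonempty → ∀ x y : W I,
    psi I x = psi I y ↔ letI := act I; ∃ γ : PiGamma Γ I, γ • x = y
  /-- `ψ_I` is an open map, so the induced bijection `W_I/Γ_I → F_I` is a homeomorphism
  onto the open set `F_I` -/
  psi_open : ∀ I : Finset A, I.Nonempty → letI := topW I; IsOpenMap (psi I)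
  /-- when `|I| > 1`, the subgroup `Γ_{I∖{i}} = {γ | γ_i = 1}` acts freely on `W_I` -/
  free : ∀ (I : Finset A) (i : A) (hi : i ∈ I), 1 < I.card →
    ∀ (γ : PiGamma Γ I) (x : W I), γ ⟨i, hi⟩ = 1 →
      (letI := act I; γ • x = x) → γ = 1
  /-- the coordinate changes (covering maps) `ρ_{IJ} : W_J → W_{IJ} ⊆ W_I`, `I ⊆ J` -/
  rho : ∀ I J : Finset A, W J → W I
  rho_self : ∀ (I : Finset A) (x : W I), rho I I x = x
  rho_cont : ∀ I J : Finset A, I ⊆ J → I.Nonempty →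
    letI := topW I; letI := topW J; Continuous (rho I J)
  /-- `ρ_{IJ}` is étale (a local homeomorphism) -/
  rho_etale : ∀ I J : Finset A, I ⊆ J → I.Nonempty →
    letI := topW I; letI := topW J; IsLocalHomeomorph (rho I J)
  /-- `ψ_I ∘ ρ_{IJ} = ψ_J` -/
  psi_rho : ∀ (I J : Finset A), I ⊆ J → I.Nonempty → ∀ x : W J,
    psi I (rho I J x) = psi J x
  /-- cocycle condition `ρ_{IJ} ∘ ρ_{JK} = ρ_{IK}` -/
  rho_comp : ∀ (I J L : Finset A), I ⊆ J → J ⊆ L → I.Nonempty → ∀ x : W L,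
    rho I J (rho J L x) = rho I L x
  /-- `ρ_{IJ}` is equivariant with respect to the projection `ρ^Γ_{IJ} : Γ_J → Γ_I` -/
  rho_equiv : ∀ (I J : Finset A) (h : I ⊆ J), I.Nonempty →
    ∀ (γ : PiGamma Γ J) (x : W J),
      letI := act I; letI := act J; rho I J (γ • x) = gres h γ • rho I J x
  /-- `ρ_{IJ}` has image `W_{IJ} = ψ_I⁻¹(F_J)` -/
  rho_range : ∀ I J : Finset A, I ⊆ J → I.Nonempty →
    Set.range (rho I J) = psi I ⁻¹' (⋂ i ∈ J, F i)
  /-- the fibres of `ρ_{IJ}` are exactly the orbits of the (free) action of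
  `Γ_{J∖I} = {γ : Γ_J | γ|_I = 1}`; together with `rho_etale`, `rho_range` this says
  that `ρ_{IJ}` is the quotient by the free `Γ_{J∖I}`-action followed by a
  `Γ_I`-equivariant homeomorphism `W_J/Γ_{J∖I} → W_{IJ}` -/
  rho_fib : ∀ (I J : Finset A) (h : I ⊆ J), I.Nonempty → ∀ x y : W J,
    rho I J x = rho I J y ↔
      ∃ γ : PiGamma Γ J, (∀ (i : A) (hi : i ∈ I), γ ⟨i, h hi⟩ = 1) ∧
        (letI := act J; γ • x = y)

attribute [instance] OrbAtlas.topW OrbAtlas.act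

namespace OrbAtlas

variable {Y : Type*} [TopologicalSpace Y] {A : Type} [DecidableEq A]
  {Γ : A → Type} [∀ i, Group (Γ i)] [∀ i, Finite (Γ i)]

/-- The footprint `F_I := ⋂_{i ∈ I} F_i`. -/
def FI (K : OrbAtlas Y A Γ) (I : Finset A) : Set Y := ⋂ i ∈ I, K.F i

/-- The index set `𝓘_Y` of the atlas: nonempty finite `I ⊆ A` with `F_I ≠ ∅`. -/
def mem (K : OrbAtlas Y A Γ) (I : Finset A) : Prop := I.Nonempty ∧ (K.FI I).Nonempty

/-- The space of objects `⊔_{I ∈ 𝓘_Y} W_I` of the categories `B_K` and `G_K`. -/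
abbrev Obj (K : OrbAtlas Y A Γ) : Type _ := Σ I : { I : Finset A // K.mem I }, K.W I.1

/-- The footprint map on objects. -/
def psiObj (K : OrbAtlas Y A Γ) : K.Obj → Y := fun x => K.psi x.1.1 x.2

/-- The space of morphisms `⊔_{I ⊆ J ∈ 𝓘_Y} W_J × Γ_I` of the category `B_K`. -/
abbrev BMor (K : OrbAtlas Y A Γ) : Type _ :=
  Σ p : { p : Finset A × Finset A // K.mem p.1 ∧ K.mem p.2 ∧ p.1 ⊆ p.2 },
    K.W p.1.2 × PiGamma Γ p.1.1

/-- Constructor for morphisms of `B_K`: the morphism `(I,J,y,γ)`. -/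
def mkB (K : OrbAtlas Y A Γ) (I J : Finset A) (hI : K.mem I) (hJ : K.mem J)
    (hIJ : I ⊆ J) (y : K.W J) (γ : PiGamma Γ I) : K.BMor :=
  ⟨⟨(I, J), hI, hJ, hIJ⟩, (y, γ)⟩

/-- The source map of `B_K`:  `(I,J,y,γ) ↦ (I, γ⁻¹ ρ_{IJ}(y))`. -/
def bsrc (K : OrbAtlas Y A Γ) : K.BMor → K.Obj :=
  fun m => ⟨⟨m.1.1.1, m.1.2.1⟩, m.2.2⁻¹ • K.rho m.1.1.1 m.1.1.2 m.2.1⟩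

/-- The target map of `B_K`:  `(I,J,y,γ) ↦ (J, y)`. -/
def btgt (K : OrbAtlas Y A Γ) : K.BMor → K.Obj :=
  fun m => ⟨⟨m.1.1.2, m.1.2.2.1⟩, m.2.1⟩

end OrbAtlas

namespace OrbAtlas

variable {Y : Type*} [TopologicalSpace Y] {A : Type} [DecidableEq A]
  {Γ : A → Type} [∀ i, Group (Γ i)] [∀ i, Finite (Γ i)]

/-- The space of morphisms `⊔ W_{I∪J} × Γ_{I∩J}` of the groupoid completion `G_K`. -/
abbrev GMor (K : OrbAtlas Y A Γ) : Type _ :=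
  Σ p : { p : Finset A × Finset A // K.mem p.1 ∧ K.mem p.2 ∧ K.mem (p.1 ∪ p.2) },
    K.W (p.1.1 ∪ p.1.2) × PiGamma Γ (p.1.1 ∩ p.1.2)

/-- Constructor for morphisms of `G_K`. -/
def mkG (K : OrbAtlas Y A Γ) (I J : Finset A) (hI : K.mem I) (hJ : K.mem J)
    (hU : K.mem (I ∪ J)) (z : K.W (I ∪ J)) (γ : PiGamma Γ (I ∩ J)) : K.GMor :=
  ⟨⟨(I, J), hI, hJ, hU⟩, (z, γ)⟩

/-- The source map of `G_K`:  `(z,γ) ↦ (I, γ⁻¹·ρ_{I(I∪J)}(z))`. -/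
def gsrc (K : OrbAtlas Y A Γ) : K.GMor → K.Obj :=
  fun m => ⟨⟨m.1.1.1, m.1.2.1⟩,
    (gext (Finset.inter_subset_left : m.1.1.1 ∩ m.1.1.2 ⊆ m.1.1.1) m.2.2)⁻¹ •
      K.rho m.1.1.1 (m.1.1.1 ∪ m.1.1.2) m.2.1⟩

/-- The target map of `G_K`:  `(z,γ) ↦ (J, ρ_{J(I∪J)}(z))`. -/
def gtgt (K : OrbAtlas Y A Γ) : K.GMor → K.Obj :=
  fun m => ⟨⟨m.1.1.2, m.1.2.2.1⟩, K.rho m.1.1.2 (m.1.1.1 ∪ m.1.1.2) m.2.1⟩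

/-- The inverse map of `G_K`:  `(z,γ) ↦ (γ⁻¹·z, γ⁻¹)`. -/
def ginv (K : OrbAtlas Y A Γ) : K.GMor → K.GMor :=
  fun m =>
    ⟨⟨(m.1.1.2, m.1.1.1),
      ⟨m.1.2.2.1, m.1.2.1, by rw [Finset.union_comm]; exact m.1.2.2.2⟩⟩,
     (cast (congrArg K.W (Finset.union_comm m.1.1.1 m.1.1.2))
        ((gext (Finset.inter_subset_union : m.1.1.1 ∩ m.1.1.2 ⊆ m.1.1.1 ∪ m.1.1.2)
            m.2.2)⁻¹ • m.2.1),
      cast (congrArg (PiGamma Γ) (Finset.inter_comm m.1.1.1 m.1.1.2)) m.2.2⁻¹)⟩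

/-- The composition of `G_K` as a relation:  `IsCompositeG K f g c` holds iff
`f = (z,γ) : W_I → W_J`, `g = (w,δ) : W_J → W_L` and
`c = (ρ_{(I∪L)(I∪J∪L)}(v), α·δ_{IJL}·γ_{IJL})` where `(v,α)` is a pair as in
Proposition 2.4(ii) of the paper. -/
def IsCompositeG (K : OrbAtlas Y A Γ) (f g c : K.GMor) : Prop :=
  ∃ (I J L : Finset A) (hI : K.mem I) (hJ : K.mem J) (hL : K.mem L)
    (hIJ : K.mem (I ∪ J)) (hJL : K.mem (J ∪ L)) (hIL : K.mem (I ∪ L))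
    (z : K.W (I ∪ J)) (γ : PiGamma Γ (I ∩ J)) (w : K.W (J ∪ L)) (δ : PiGamma Γ (J ∩ L))
    (v : K.W (I ∪ J ∪ L)) (α : PiGamma Γ ((I ∩ L) \ J)),
    f = K.mkG I J hI hJ hIJ z γ ∧
    g = K.mkG J L hJ hL hJL w δ ∧
    K.rho (I ∪ J) (I ∪ J ∪ L) v =
      (gext (Finset.sdiff_subset.trans
          (Finset.inter_subset_left.trans (Finset.subset_union_left : I ⊆ I ∪ J)))
          (gres (Finset.sdiff_subset : (I ∩ J) \ L ⊆ I ∩ J) γ))⁻¹ •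
        (gext (Finset.sdiff_subset.trans
            (Finset.inter_subset_left.trans (Finset.subset_union_left : I ⊆ I ∪ J))) α •
          (gext (Finset.inter_subset_left.trans
              (Finset.subset_union_right : J ⊆ I ∪ J)) δ • z)) ∧
    K.rho (J ∪ L) (I ∪ J ∪ L) v =
      (gext (Finset.sdiff_subset.trans
          (Finset.inter_subset_right.trans (Finset.subset_union_left : J ⊆ J ∪ L)))
          (gres (Finset.sdiff_subset : (I ∩ J) \ L ⊆ I ∩ J) γ))⁻¹ • w ∧
    c = K.mkG I L hI hL hIL (K.rho (I ∪ L) (I ∪ J ∪ L) v)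
      (gext Finset.sdiff_subset α *
       gext (Finset.inter_subset_inter Finset.inter_subset_left subset_rfl)
         (gres (Finset.inter_subset_inter Finset.inter_subset_right subset_rfl) δ) *
       gext (Finset.inter_subset_inter Finset.inter_subset_left subset_rfl)
         (gres Finset.inter_subset_left γ))

/-- The inclusion functor `B_K → G_K` (the identity on objects). -/
def iotaBG (K : OrbAtlas Y A Γ) : K.BMor → K.GMor :=
  fun m =>
    ⟨⟨(m.1.1.1, m.1.1.2),
      ⟨m.1.2.1, m.1.2.2.1, by rw [Finset.union_eq_right.mpr m.1.2.2.2]; exact m.1.2.2.1⟩⟩,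
     (cast (congrArg K.W (Finset.union_eq_right.mpr m.1.2.2.2).symm) m.2.1,
      cast (congrArg (PiGamma Γ) (Finset.inter_eq_left.mpr m.1.2.2.2).symm) m.2.2)⟩

/-- The relation on objects generating the realization `|B_K|`. -/
def bStep (K : OrbAtlas Y A Γ) : K.Obj → K.Obj → Prop :=
  fun x y => ∃ m : K.BMor, K.bsrc m = x ∧ K.btgt m = y

/-- The relation on objects generating the realization `|G_K|`. -/
def gStep (K : OrbAtlas Y A Γ) : K.Obj → K.Obj → Prop :=
  fun x y => ∃ m : K.GMor, K.gsrc m = x ∧ K.gtgt m = y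

end OrbAtlas

namespace OrbAtlas

variable {Y : Type*} [TopologicalSpace Y] {A : Type} [DecidableEq A]
  {Γ : A → Type} [∀ i, Group (Γ i)] [∀ i, Finite (Γ i)]

/-- Given a cover reduction `Q` of the footprint cover, the objects of the reduced
groupoid `V_K` are the points of the sets `V_I = ψ_I⁻¹(Q_I)`. -/
def InV (K : OrbAtlas Y A Γ) (Q : Finset A → Set Y) (x : K.Obj) : Prop :=
  K.psiObj x ∈ Q x.1.1

/-- The object space `⊔_I V_I` of the reduced groupoid `V_K`. -/
abbrev VObj (K : OrbAtlas Y A Γ) (Q : Finset A → Set Y) : Type _ :=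
  { x : K.Obj // K.InV Q x }

/-- An object of `V_K` from a point of `V_J = ψ_J⁻¹(Q_J)`. -/
def mkV (K : OrbAtlas Y A Γ) (Q : Finset A → Set Y) (J : Finset A) (hJ : K.mem J)
    (x : K.W J) (hx : K.psi J x ∈ Q J) : K.VObj Q :=
  ⟨⟨⟨J, hJ⟩, x⟩, hx⟩

/-- The morphisms of `V_K` from `V_I` to `V_J` for `I ⊆ J`: the union over nonempty
`K' ⊆ I` of `(Ṽ_{K'J} ∩ Ṽ_{IJ}) × Γ_{I∖K'}`, viewed inside
`Mor_{G_K}(W_I, W_J) = W_{I∪J} × Γ_{I∩J}`. -/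
def VCondUp (K : OrbAtlas Y A Γ) (Q : Finset A → Set Y) (m : K.GMor) : Prop :=
  m.1.1.1 ⊆ m.1.1.2 ∧
  K.psi (m.1.1.1 ∪ m.1.1.2) m.2.1 ∈ Q m.1.1.2 ∧
  ∃ K' : Finset A, K'.Nonempty ∧ K' ⊆ m.1.1.1 ∧
    K.psi (m.1.1.1 ∪ m.1.1.2) m.2.1 ∈ Q K' ∧
    K.psi (m.1.1.1 ∪ m.1.1.2) m.2.1 ∈ Q m.1.1.1 ∧
    (∀ (i : A) (hi : i ∈ m.1.1.1 ∩ m.1.1.2), i ∈ K' → m.2.2 ⟨i, hi⟩ = 1)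

/-- The set of morphisms of the reduced groupoid `V_K ⊆ G_K`: for `I ⊆ J` the
morphisms `⋃_{∅ ≠ K' ⊆ I} (Ṽ_{K'J} ∩ Ṽ_{IJ}) × Γ_{I∖K'}`, for `I ⊇ J` the inverses of
these, and no others. -/
def MorV (K : OrbAtlas Y A Γ) (Q : Finset A → Set Y) : Set K.GMor :=
  {m | K.VCondUp Q m ∨ ∃ μ : K.GMor, K.VCondUp Q μ ∧ m = K.ginv μ}

/-- `m` is an identity morphism of `G_K` at `x`. -/
def IsIdG (K : OrbAtlas Y A Γ) (m : K.GMor) (x : K.Obj) : Prop :=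
  K.gsrc m = x ∧ K.gtgt m = x ∧ m.1.1.1 = m.1.1.2 ∧ m.2.2 = 1

end OrbAtlas

namespace OrbAtlas

variable {Y : Type*} [TopologicalSpace Y] {A : Type} [DecidableEq A]
  {Γ : A → Type} [∀ i, Group (Γ i)] [∀ i, Finite (Γ i)]

/-! ### Auxiliary lemmas -/

section Aux

set_option linter.unusedSectionVars false

variable (K : OrbAtlas Y A Γ)

theorem psi_castW {I J : Finset A} (h : I = J) (x : K.W I) :
    K.psi J (cast (congrArg K.W h) x) = K.psi I x := by subst h; rfl

theorem castG_inv {I J : Finset A} (h : I = J) (γ : PiGamma Γ I) :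
    cast (congrArg (PiGamma Γ) h) γ⁻¹ = (cast (congrArg (PiGamma Γ) h) γ)⁻¹ := by
  subst h; rfl

theorem castG_apply {I J : Finset A} (h : I = J) (γ : PiGamma Γ I) (i : A) (hi : i ∈ J)
    (hi' : i ∈ I) :
    cast (congrArg (PiGamma Γ) h) γ ⟨i, hi⟩ = γ ⟨i, hi'⟩ := by subst h; rfl

theorem castW_smul {I J : Finset A} (h : I = J) (γ : PiGamma Γ I) (x : K.W I) :
    cast (congrArg K.W h) (γ • x) =
      cast (congrArg (PiGamma Γ) h) γ • cast (congrArg K.W h) x := by subst h; rfl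

theorem gext_cast {I I' J J' : Finset A} (h : I = I') (h2 : J = J') (s : I ⊆ J)
    (s' : I' ⊆ J') (γ : PiGamma Γ I) :
    gext s' (cast (congrArg (PiGamma Γ) h) γ) =
      cast (congrArg (PiGamma Γ) h2) (gext s γ) := by subst h; subst h2; rfl

theorem gext_inv {I J : Finset A} (s : I ⊆ J) (γ : PiGamma Γ I) :
    gext s γ⁻¹ = (gext s γ)⁻¹ := by
  funext j
  simp only [gext, Pi.inv_apply]
  split <;> simp

/-- The symmetric characterization of membership in `MorV`. -/
def SCond (Q : Finset A → Set Y) (m : K.GMor) : Prop :=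
  (m.1.1.1 ⊆ m.1.1.2 ∨ m.1.1.2 ⊆ m.1.1.1) ∧
  K.psi (m.1.1.1 ∪ m.1.1.2) m.2.1 ∈ Q m.1.1.1 ∧
  K.psi (m.1.1.1 ∪ m.1.1.2) m.2.1 ∈ Q m.1.1.2 ∧
  ∃ K' : Finset A, K'.Nonempty ∧ K' ⊆ m.1.1.1 ∩ m.1.1.2 ∧
    K.psi (m.1.1.1 ∪ m.1.1.2) m.2.1 ∈ Q K' ∧
    ∀ (i : A) (hi : i ∈ m.1.1.1 ∩ m.1.1.2), i ∈ K' → m.2.2 ⟨i, hi⟩ = 1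

theorem ginv_ginv (m : K.GMor) : K.ginv (K.ginv m) = m := by
  obtain ⟨⟨⟨I, J⟩, hm⟩, z, γ⟩ := m
  show (⟨⟨(I, J), hm⟩, (_, _)⟩ : K.GMor) = _
  refine congrArg (fun q : K.W (I ∪ J) × PiGamma Γ (I ∩ J) =>
    (⟨⟨(I, J), hm⟩, q⟩ : K.GMor)) ?_
  refine Prod.ext ?_ ?_
  · show cast (congrArg K.W (Finset.union_comm J I))
        ((gext Finset.inter_subset_union
            (cast (congrArg (PiGamma Γ) (Finset.inter_comm I J)) γ⁻¹))⁻¹ •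
          cast (congrArg K.W (Finset.union_comm I J))
            ((gext Finset.inter_subset_union γ)⁻¹ • z)) = z
    rw [gext_cast (Finset.inter_comm I J) (Finset.union_comm I J)
        Finset.inter_subset_union Finset.inter_subset_union γ⁻¹,
      ← castG_inv, ← castW_smul, gext_inv, inv_inv, smul_inv_smul, cast_cast, cast_eq]
    all_goals exact Finset.union_comm _ _
  · show cast (congrArg (PiGamma Γ) (Finset.inter_comm J I))
        (cast (congrArg (PiGamma Γ) (Finset.inter_comm I J)) γ⁻¹)⁻¹ = γ
    rw [castG_inv, cast_cast, cast_eq, inv_inv]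
    all_goals exact Finset.inter_comm _ _

theorem psi_ginv (m : K.GMor) :
    K.psi (m.1.1.2 ∪ m.1.1.1) (K.ginv m).2.1 = K.psi (m.1.1.1 ∪ m.1.1.2) m.2.1 := by
  obtain ⟨⟨⟨I, J⟩, hm⟩, z, γ⟩ := m
  show K.psi (J ∪ I) (cast (congrArg K.W (Finset.union_comm I J)) _) = _
  rw [psi_castW, K.psi_smul]
  all_goals exact Finset.union_comm _ _

theorem sCond_ginv {Q : Finset A → Set Y} {m : K.GMor} (h : K.SCond Q m) :
    K.SCond Q (K.ginv m) := by
  obtain ⟨hdir, hQ1, hQ2, K', hK'ne, hK'sub, hK'Q, hK'γ⟩ := h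
  have hψ := K.psi_ginv m
  obtain ⟨⟨⟨I, J⟩, hm⟩, z, γ⟩ := m
  refine ⟨hdir.symm, ?_, ?_, K', hK'ne, ?_, ?_, ?_⟩
  · exact hψ ▸ hQ2
  · exact hψ ▸ hQ1
  · intro i hi
    have := hK'sub hi
    simp only [Finset.mem_inter] at this ⊢
    exact ⟨this.2, this.1⟩
  · exact hψ ▸ hK'Q
  · intro i hi hiK'
    have hi' : i ∈ I ∩ J := by
      simp only [Finset.mem_inter] at hi ⊢; exact ⟨hi.2, hi.1⟩
    show cast (congrArg (PiGamma Γ) (Finset.inter_comm I J)) γ⁻¹ ⟨i, hi⟩ = 1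
    rw [castG_apply (Γ := Γ) (Finset.inter_comm I J) γ⁻¹ i hi hi']
    exact inv_eq_one.mpr (hK'γ i hi' hiK')

theorem vCondUp_sCond {Q : Finset A → Set Y} {m : K.GMor} (h : K.VCondUp Q m) :
    K.SCond Q m := by
  obtain ⟨hsub, hQ2, K', hK'ne, hK'sub, hK'Q, hQ1, hK'γ⟩ := h
  exact ⟨Or.inl hsub, hQ1, hQ2, K', hK'ne,
    fun i hi => Finset.mem_inter.mpr ⟨hK'sub hi, hsub (hK'sub hi)⟩, hK'Q, hK'γ⟩

theorem morV_iff {Q : Finset A → Set Y} {m : K.GMor} :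
    m ∈ K.MorV Q ↔ K.SCond Q m := by
  constructor
  · rintro (h | ⟨μ, hμ, rfl⟩)
    · exact K.vCondUp_sCond h
    · exact K.sCond_ginv (K.vCondUp_sCond hμ)
  · intro h
    rcases h.1 with hdir | hdir
    · left
      obtain ⟨_, hQ1, hQ2, K', hK'ne, hK'sub, hK'Q, hK'γ⟩ := h
      exact ⟨hdir, hQ2, K', hK'ne, fun i hi => (Finset.mem_inter.mp (hK'sub hi)).1,
        hK'Q, hQ1, hK'γ⟩
    · right
      refine ⟨K.ginv m, ?_, (K.ginv_ginv m).symm⟩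
      have h' := K.sCond_ginv h
      obtain ⟨_, hQ1, hQ2, K', hK'ne, hK'sub, hK'Q, hK'γ⟩ := h'
      refine ⟨hdir, hQ2, K', hK'ne,
        fun i hi => (Finset.mem_inter.mp (hK'sub hi)).1, hK'Q, hQ1, hK'γ⟩

end Aux

/-- Let `K` be a strict orbifold atlas on a compact orbifold `Y` and `V = (V_I)` the
reduction of `K` associated to a cover reduction `(Q_I)` of the footprint cover.  Then
the groupoid `V_K` is well defined: its set of morphisms contains all identity
morphisms at objects of `V_K`, is closed under composition in `G_K`, and is closed
under taking inverses; in particular `V_K` is a nonsingular étale groupoid (it has at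
most one morphism between any two objects, and its morphism set is open in that of
`G_K`). -/
theorem reduced_groupoid_wellDefined
    [T2Space Y] [CompactSpace Y] (K : OrbAtlas Y A Γ)
    (Q : Finset A → Set Y)
    (hQopen : ∀ I, IsOpen (Q I))
    (hQempty : Q ∅ = ∅)
    (hQprecpt : ∀ I : Finset A, I.Nonempty → closure (Q I) ⊆ K.FI I)
    (hQcover : (⋃ I : Finset A, Q I) = Set.univ)
    (hQsep : ∀ I J : Finset A, (closure (Q I) ∩ closure (Q J)).Nonempty →
      I ⊆ J ∨ J ⊆ I) :
    -- V_K contains the identity morphisms at its objects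
    (∀ (x : K.Obj), K.InV Q x → ∀ m : K.GMor, K.IsIdG m x → m ∈ K.MorV Q) ∧
    -- V_K is closed under composition in G_K
    (∀ f g c : K.GMor, f ∈ K.MorV Q → g ∈ K.MorV Q →
      K.IsCompositeG f g c → c ∈ K.MorV Q) ∧
    -- V_K is closed under taking inverses
    (∀ f : K.GMor, f ∈ K.MorV Q → K.ginv f ∈ K.MorV Q) ∧
    -- sources and targets of V_K-morphisms are objects of V_K
    (∀ f : K.GMor, f ∈ K.MorV Q → K.InV Q (K.gsrc f) ∧ K.InV Q (K.gtgt f)) ∧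
    -- V_K is nonsingular: at most one morphism between any two objects
    (∀ f g : K.GMor, f ∈ K.MorV Q → g ∈ K.MorV Q →
      K.gsrc f = K.gsrc g → K.gtgt f = K.gtgt g → f = g) ∧
    -- V_K is étale: its morphism set is open in Mor_{G_K}
    IsOpen (K.MorV Q) := by
  refine ⟨?_, ?_, ?_, ?_, ?_, ?_⟩
  -- Part 1: identities
  · rintro x hx m ⟨hsrc, htgt, hIJ, hγ⟩
    rw [K.morV_iff]
    obtain ⟨⟨⟨I, J⟩, h1, h2, h3⟩, z, γ⟩ := m
    have hIJ' : I = J := hIJ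
    subst hIJ'
    have hγ' : γ = 1 := hγ
    subst hγ'
    subst htgt
    have hx' : K.psi I (K.rho I (I ∪ I) z) ∈ Q I := hx
    have key : K.psi (I ∪ I) z ∈ Q I := by
      rw [← K.psi_rho I (I ∪ I) Finset.subset_union_left h1.1 z]
      exact hx'
    exact ⟨Or.inl subset_rfl, key, key, I, h1.1,
      Finset.subset_inter subset_rfl subset_rfl, key, fun i hi _ => rfl⟩
  -- Part 2: composition
  · intro f g c hf hg hcomp
    obtain ⟨I, J, L, hI, hJ, hL, hIJ, hJL, hIL, z, γ, w, δ, v, α, rfl, rfl, hv1, hv2, rfl⟩ :=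
      hcomp
    rw [K.morV_iff] at hf hg ⊢
    obtain ⟨_, hzI, hzJ, K1, hK1ne, hK1sub, hK1Q, hK1γ⟩ := hf
    obtain ⟨_, hwJ, hwL, K2, hK2ne, hK2sub, hK2Q, hK2γ⟩ := hg
    have hK1sub' : K1 ⊆ I ∩ J := hK1sub
    have hK2sub' : K2 ⊆ J ∩ L := hK2sub
    have hsubIJ : I ∪ J ⊆ I ∪ J ∪ L := Finset.subset_union_left
    have hsubJL : J ∪ L ⊆ I ∪ J ∪ L :=
      Finset.union_subset_union Finset.subset_union_right subset_rfl
    have hsubIL : I ∪ L ⊆ I ∪ J ∪ L :=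
      Finset.union_subset_union Finset.subset_union_left subset_rfl
    have hvz : K.psi (I ∪ J ∪ L) v = K.psi (I ∪ J) z := by
      have h := congrArg (K.psi (I ∪ J)) hv1
      rw [K.psi_rho (I ∪ J) (I ∪ J ∪ L) hsubIJ hIJ.1] at h
      rw [h, K.psi_smul, K.psi_smul, K.psi_smul]
    have hvw : K.psi (I ∪ J ∪ L) v = K.psi (J ∪ L) w := by
      have h := congrArg (K.psi (J ∪ L)) hv2
      rw [K.psi_rho (J ∪ L) (I ∪ J ∪ L) hsubJL hJL.1] at h
      rw [h, K.psi_smul]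
    have hy : K.psi (I ∪ L) (K.rho (I ∪ L) (I ∪ J ∪ L) v) = K.psi (I ∪ J ∪ L) v :=
      K.psi_rho (I ∪ L) (I ∪ J ∪ L) hsubIL hIL.1 v
    have hyI : K.psi (I ∪ L) (K.rho (I ∪ L) (I ∪ J ∪ L) v) ∈ Q I := by
      rw [hy, hvz]; exact hzI
    have hyJ : K.psi (I ∪ L) (K.rho (I ∪ L) (I ∪ J ∪ L) v) ∈ Q J := by
      rw [hy, hvz]; exact hzJ
    have hyL : K.psi (I ∪ L) (K.rho (I ∪ L) (I ∪ J ∪ L) v) ∈ Q L := by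
      rw [hy, hvw]; exact hwL
    have hyK1 : K.psi (I ∪ L) (K.rho (I ∪ L) (I ∪ J ∪ L) v) ∈ Q K1 := by
      rw [hy, hvz]; exact hK1Q
    have hyK2 : K.psi (I ∪ L) (K.rho (I ∪ L) (I ∪ J ∪ L) v) ∈ Q K2 := by
      rw [hy, hvw]; exact hK2Q
    obtain ⟨K', hK'1, hK'2, hK'ne, hK'Q⟩ :
        ∃ K', K' ⊆ K1 ∧ K' ⊆ K2 ∧ K'.Nonempty ∧
          K.psi (I ∪ L) (K.rho (I ∪ L) (I ∪ J ∪ L) v) ∈ Q K' := by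
      rcases hQsep K1 K2 ⟨_, subset_closure hyK1, subset_closure hyK2⟩ with h | h
      · exact ⟨K1, subset_rfl, h, hK1ne, hyK1⟩
      · exact ⟨K2, h, subset_rfl, hK2ne, hyK2⟩
    refine ⟨hQsep I L ⟨_, subset_closure hyI, subset_closure hyL⟩, hyI, hyL, K', hK'ne,
      ?_, hK'Q, ?_⟩
    · intro i hi
      exact Finset.mem_inter.mpr
        ⟨(Finset.mem_inter.mp (hK1sub' (hK'1 hi))).1,
         (Finset.mem_inter.mp (hK2sub' (hK'2 hi))).2⟩
    · intro i hi hiK'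
      have hiK1 : i ∈ K1 := hK'1 hiK'
      have hiK2 : i ∈ K2 := hK'2 hiK'
      have hiIJ : i ∈ I ∩ J := hK1sub' hiK1
      have hiJL : i ∈ J ∩ L := hK2sub' hiK2
      have hiI : i ∈ I := (Finset.mem_inter.mp hiIJ).1
      have hiJ : i ∈ J := (Finset.mem_inter.mp hiIJ).2
      have hiL : i ∈ L := (Finset.mem_inter.mp hiJL).2
      have e2 : ∀ p : i ∈ J ∩ L, δ ⟨i, p⟩ = 1 := fun p => hK2γ i p hiK2
      have e3 : ∀ p : i ∈ I ∩ J, γ ⟨i, p⟩ = 1 := fun p => hK1γ i p hiK1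
      show gext Finset.sdiff_subset α ⟨i, hi⟩ *
          gext (Finset.inter_subset_inter Finset.inter_subset_left subset_rfl)
            (gres (Finset.inter_subset_inter Finset.inter_subset_right subset_rfl) δ)
            ⟨i, hi⟩ *
          gext (Finset.inter_subset_inter Finset.inter_subset_left subset_rfl)
            (gres Finset.inter_subset_left γ) ⟨i, hi⟩ = 1
      simp only [mkG, gext, gres]
      rw [dif_neg (by simp [Finset.mem_sdiff, hiJ])]
      have hIJL : i ∈ I ∩ J ∩ L := by simp [Finset.mem_inter, hiI, hiJ, hiL]
      simp [hIJL, e2, e3]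
  -- Part 3: inverses
  · intro f hf
    exact (K.morV_iff).mpr (K.sCond_ginv ((K.morV_iff).mp hf))
  -- Part 4: sources and targets
  · intro f hf
    obtain ⟨hdir, hQ1, hQ2, _⟩ := (K.morV_iff).mp hf
    obtain ⟨⟨⟨I, J⟩, h1, h2, h3⟩, z, γ⟩ := f
    constructor
    · show K.psi I ((gext Finset.inter_subset_left γ)⁻¹ • K.rho I (I ∪ J) z) ∈ Q I
      rw [K.psi_smul, K.psi_rho I (I ∪ J) Finset.subset_union_left h1.1]
      exact hQ1
    · show K.psi J (K.rho J (I ∪ J) z) ∈ Q J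
      rw [K.psi_rho J (I ∪ J) Finset.subset_union_right h2.1]
      exact hQ2
  -- Part 5: nonsingularity
  · intro f g hf hg hsrc htgt
    obtain ⟨_, _, _, Kf, hKfne, hKfsub, hKfQ, hKfγ⟩ := (K.morV_iff).mp hf
    obtain ⟨_, _, _, Kg, hKgne, hKgsub, hKgQ, hKgγ⟩ := (K.morV_iff).mp hg
    obtain ⟨⟨⟨I, J⟩, h1, h2, h3⟩, z, γ⟩ := f
    obtain ⟨⟨⟨I', J'⟩, h1', h2', h3'⟩, w, δ⟩ := g
    have hII : I = I' := congrArg (fun x : K.Obj => x.1.1) hsrc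
    subst hII
    have hJJ : J = J' := congrArg (fun x : K.Obj => x.1.1) htgt
    subst hJJ
    have hKfsub' : Kf ⊆ I ∩ J := hKfsub
    have hKgsub' : Kg ⊆ I ∩ J := hKgsub
    have hsrc' : (⟨⟨I, h1⟩, (gext Finset.inter_subset_left γ)⁻¹ •
          K.rho I (I ∪ J) z⟩ : K.Obj) =
        ⟨⟨I, h1'⟩, (gext Finset.inter_subset_left δ)⁻¹ • K.rho I (I ∪ J) w⟩ := hsrc
    have htgt' : (⟨⟨J, h2⟩, K.rho J (I ∪ J) z⟩ : K.Obj) =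
        ⟨⟨J, h2'⟩, K.rho J (I ∪ J) w⟩ := htgt
    injection hsrc' with e1 e2
    injection htgt' with e3 e4
    have hsrc2 : (gext Finset.inter_subset_left γ)⁻¹ • K.rho I (I ∪ J) z =
        (gext Finset.inter_subset_left δ)⁻¹ • K.rho I (I ∪ J) w := e2
    have htgt2 : K.rho J (I ∪ J) z = K.rho J (I ∪ J) w := e4
    obtain ⟨β, hβJ, hβz⟩ :=
      (K.rho_fib J (I ∪ J) Finset.subset_union_right h2.1 z w).mp htgt2
    have hrw : K.rho I (I ∪ J) w =
        gres Finset.subset_union_left β • K.rho I (I ∪ J) z := by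
      rw [← hβz, K.rho_equiv I (I ∪ J) Finset.subset_union_left h1.1 β z]
    rw [hrw, ← mul_smul] at hsrc2
    set u := K.rho I (I ∪ J) z with hu
    set θ := gext (Finset.inter_subset_left : I ∩ J ⊆ I) γ *
      ((gext (Finset.inter_subset_left : I ∩ J ⊆ I) δ)⁻¹ *
        gres (Finset.subset_union_left : I ⊆ I ∪ J) β) with hθdef
    have hθu : θ • u = u := by
      rw [hθdef, mul_smul, ← hsrc2, smul_inv_smul]
    have hzw : K.psi (I ∪ J) w = K.psi (I ∪ J) z := by
      rw [← hβz, K.psi_smul]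
    obtain ⟨i₀, hi₀f, hi₀g⟩ : ∃ i, i ∈ Kf ∧ i ∈ Kg := by
      have hKgQ' : K.psi (I ∪ J) z ∈ Q Kg := by rw [← hzw]; exact hKgQ
      rcases hQsep Kf Kg ⟨_, subset_closure hKfQ, subset_closure hKgQ'⟩ with h | h
      · obtain ⟨i, hi⟩ := hKfne; exact ⟨i, hi, h hi⟩
      · obtain ⟨i, hi⟩ := hKgne; exact ⟨i, h hi, hi⟩
    have hi₀IJ : i₀ ∈ I ∩ J := hKfsub' hi₀f
    have hi₀I : i₀ ∈ I := (Finset.mem_inter.mp hi₀IJ).1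
    have hi₀J : i₀ ∈ J := (Finset.mem_inter.mp hi₀IJ).2
    have hθcomp : ∀ (i : A) (hiI : i ∈ I), θ ⟨i, hiI⟩ =
        gext Finset.inter_subset_left γ ⟨i, hiI⟩ *
        ((gext Finset.inter_subset_left δ ⟨i, hiI⟩)⁻¹ *
          β ⟨i, Finset.subset_union_left hiI⟩) := fun i hiI => rfl
    have hθ1 : θ ⟨i₀, hi₀I⟩ = 1 := by
      rw [hθcomp i₀ hi₀I]
      have hA : gext (Finset.inter_subset_left : I ∩ J ⊆ I) γ ⟨i₀, hi₀I⟩ = 1 := by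
        simp only [gext]
        rw [dif_pos hi₀IJ]
        exact hKfγ i₀ hi₀IJ hi₀f
      have hB : gext (Finset.inter_subset_left : I ∩ J ⊆ I) δ ⟨i₀, hi₀I⟩ = 1 := by
        simp only [gext]
        rw [dif_pos hi₀IJ]
        exact hKgγ i₀ hi₀IJ hi₀g
      rw [hA, hB, hβJ i₀ hi₀J]
      simp
    have hθ : θ = 1 := by
      rcases Nat.lt_or_ge 1 I.card with hcard | hcard
      · exact K.free I i₀ hi₀I hcard θ u hθ1 hθu
      · funext j
        obtain ⟨i, hi⟩ := j
        have hii : i = i₀ := Finset.card_le_one.mp hcard i hi i₀ hi₀I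
        subst hii
        exact hθ1
    have hcompo : ∀ (i : A) (hiI : i ∈ I),
        gext Finset.inter_subset_left γ ⟨i, hiI⟩ *
        ((gext Finset.inter_subset_left δ ⟨i, hiI⟩)⁻¹ *
          β ⟨i, Finset.subset_union_left hiI⟩) = 1 := by
      intro i hiI
      rw [← hθcomp i hiI, hθ]
      rfl
    have hγδ : γ = δ := by
      funext j
      obtain ⟨i, hij⟩ := j
      have hiI : i ∈ I := (Finset.mem_inter.mp hij).1
      have hiJ : i ∈ J := (Finset.mem_inter.mp hij).2
      have h := hcompo i hiI
      simp only [gext] at h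
      rw [dif_pos hij, dif_pos hij, hβJ i hiJ, mul_one] at h
      exact mul_inv_eq_one.mp h
    have hβ1 : β = 1 := by
      funext j
      obtain ⟨i, hij⟩ := j
      show β ⟨i, hij⟩ = 1
      by_cases hiJ : i ∈ J
      · exact hβJ i hiJ
      · have hiI : i ∈ I := by
          rcases Finset.mem_union.mp hij with h | h
          · exact h
          · exact absurd h hiJ
        have h := hcompo i hiI
        have hnot : i ∉ I ∩ J := by simp [Finset.mem_inter, hiJ]
        simp only [gext] at h
        rw [dif_neg hnot, dif_neg hnot] at h
        simpa using h
    rw [hβ1, one_smul] at hβz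
    subst hβz
    subst hγδ
    rfl
  -- Part 6: openness
  · have hMor : K.MorV Q = {m : K.GMor | K.SCond Q m} := Set.ext fun m => K.morV_iff
    rw [hMor, isOpen_sigma_iff]
    rintro ⟨⟨I, J⟩, hm⟩
    have hdisc : DiscreteTopology (PiGamma Γ (I ∩ J)) := ⟨rfl⟩
    by_cases hdir : I ⊆ J ∨ J ⊆ I
    · have hset : (Sigma.mk ⟨(I, J), hm⟩ ⁻¹' {m : K.GMor | K.SCond Q m}) =
          ⋃ K' : Finset A,
            {x : K.W (I ∪ J) × PiGamma Γ (I ∩ J) |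
              (K'.Nonempty ∧ K' ⊆ I ∩ J) ∧
              K.psi (I ∪ J) x.1 ∈ Q I ∧ K.psi (I ∪ J) x.1 ∈ Q J ∧
              K.psi (I ∪ J) x.1 ∈ Q K' ∧
              (∀ (i : A) (hi : i ∈ I ∩ J), i ∈ K' → x.2 ⟨i, hi⟩ = 1)} := by
        ext x
        simp only [Set.mem_preimage, Set.mem_iUnion, Set.mem_setOf_eq, SCond]
        constructor
        · rintro ⟨_, hQ1, hQ2, K', hne, hsub, hQK, hγ⟩
          exact ⟨K', ⟨hne, hsub⟩, hQ1, hQ2, hQK, hγ⟩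
        · rintro ⟨K', ⟨hne, hsub⟩, hQ1, hQ2, hQK, hγ⟩
          exact ⟨hdir, hQ1, hQ2, K', hne, hsub, hQK, hγ⟩
      rw [hset]
      refine isOpen_iUnion fun K' => ?_
      by_cases hC : K'.Nonempty ∧ K' ⊆ I ∩ J
      · have hcont : Continuous fun x : K.W (I ∪ J) × PiGamma Γ (I ∩ J) =>
            K.psi (I ∪ J) x.1 := (K.psi_cont (I ∪ J)).comp continuous_fst
        have hset2 : {x : K.W (I ∪ J) × PiGamma Γ (I ∩ J) |
              (K'.Nonempty ∧ K' ⊆ I ∩ J) ∧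
              K.psi (I ∪ J) x.1 ∈ Q I ∧ K.psi (I ∪ J) x.1 ∈ Q J ∧
              K.psi (I ∪ J) x.1 ∈ Q K' ∧
              (∀ (i : A) (hi : i ∈ I ∩ J), i ∈ K' → x.2 ⟨i, hi⟩ = 1)} =
            ((fun x : K.W (I ∪ J) × PiGamma Γ (I ∩ J) => K.psi (I ∪ J) x.1) ⁻¹'
              (Q I ∩ Q J ∩ Q K')) ∩
            (Prod.snd ⁻¹' {γ : PiGamma Γ (I ∩ J) |
              ∀ (i : A) (hi : i ∈ I ∩ J), i ∈ K' → γ ⟨i, hi⟩ = 1}) := by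
          ext x
          simp only [Set.mem_setOf_eq, Set.mem_inter_iff, Set.mem_preimage]
          tauto
        rw [hset2]
        exact ((hcont.isOpen_preimage _
          (((hQopen I).inter (hQopen J)).inter (hQopen K'))).inter
          ((continuous_snd.isOpen_preimage _ (isOpen_discrete _))))
      · convert isOpen_empty
        ext x
        simp only [Set.mem_setOf_eq, Set.mem_empty_iff_false, iff_false]
        exact fun h => hC h.1
    · convert isOpen_empty
      ext x
      simp only [Set.mem_preimage, Set.mem_setOf_eq, SCond, Set.mem_empty_iff_false,
        iff_false]
      exact fun h => hdir h.1

end OrbAtlas
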